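/- For any A > 0 and k ≥ 1, the marginal increase in lost traffic from adding extra load is bounded by the new blocking probability: for B > 0, (A+B)·E_k(A+B) − A·E_k(A) ≤ B, hence the class-i blocking probability P_b(i) = ((Â_i)E_k(Â_i) − (Â_{i−1})E_k(Â_{i−1}))/A_i is at most 1. -/

import Mathlib

open Finset

noncomputable def ErlangB (k : ℕ) (A : ℝ) : ℝ :=
  (A ^ k / (Nat.factorial k : ℝ)) / (∑ m ∈ Finset.range (k + 1), A ^ m / (Nat.factorial m : ℝ))

private lemma pair_aux {x y : ℝ} (hx : 0 ≤ x) (hxy : x ≤ y) {m n : ℕ} (h : n ≤ m) :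
    x ^ m * y ^ n ≤ y ^ m * x ^ n := by
  obtain ⟨d, rfl⟩ := Nat.exists_eq_add_of_le h
  have hy : 0 ≤ y := hx.trans hxy
  have hd : x ^ d ≤ y ^ d := pow_le_pow_left₀ hx hxy d
  calc x ^ (n + d) * y ^ n = (x * y) ^ n * x ^ d := by rw [mul_pow]; ring
    _ ≤ (x * y) ^ n * y ^ d := by
        apply mul_le_mul_of_nonneg_left hd (by positivity)
    _ = y ^ (n + d) * x ^ n := by rw [mul_pow]; ring

private lemma pair_half {x y : ℝ} (hx : 0 ≤ x) (hxy : x ≤ y) {m n : ℕ} (h : n ≤ m) :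
    0 ≤ ((m:ℝ) - n) * (y^m/(Nat.factorial m : ℝ) * (x^n/(Nat.factorial n : ℝ)) -
      x^m/(Nat.factorial m : ℝ) * (y^n/(Nat.factorial n : ℝ))) := by
  have hm : (0:ℝ) < (Nat.factorial m : ℝ) := by exact_mod_cast m.factorial_pos
  have hn : (0:ℝ) < (Nat.factorial n : ℝ) := by exact_mod_cast n.factorial_pos
  apply mul_nonneg
  · have : (n:ℝ) ≤ (m:ℝ) := by exact_mod_cast h
    linarith
  · have e : y^m/(Nat.factorial m : ℝ) * (x^n/(Nat.factorial n : ℝ)) -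
        x^m/(Nat.factorial m : ℝ) * (y^n/(Nat.factorial n : ℝ)) =
        (y^m * x^n - x^m * y^n) / ((Nat.factorial m : ℝ) * (Nat.factorial n : ℝ)) := by
      field_simp
    rw [e]
    apply div_nonneg (by linarith [pair_aux hx hxy h]) (by positivity)

private lemma pair_nonneg {x y : ℝ} (hx : 0 ≤ x) (hxy : x ≤ y) (m n : ℕ) :
    0 ≤ ((m:ℝ) - n) * (y^m/(Nat.factorial m : ℝ) * (x^n/(Nat.factorial n : ℝ)) -
      x^m/(Nat.factorial m : ℝ) * (y^n/(Nat.factorial n : ℝ))) := by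
  rcases le_total n m with h | h
  · exact pair_half hx hxy h
  · have e : ((m:ℝ) - n) * (y^m/(Nat.factorial m : ℝ) * (x^n/(Nat.factorial n : ℝ)) -
        x^m/(Nat.factorial m : ℝ) * (y^n/(Nat.factorial n : ℝ))) =
        ((n:ℝ) - m) * (y^n/(Nat.factorial n : ℝ) * (x^m/(Nat.factorial m : ℝ)) -
        x^n/(Nat.factorial n : ℝ) * (y^m/(Nat.factorial m : ℝ))) := by ring
    rw [e]
    exact pair_half hx hxy h

private lemma chebyshev (k : ℕ) {x y : ℝ} (hx : 0 ≤ x) (hxy : x ≤ y) :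
    (∑ m ∈ range (k+1), (m:ℝ) * (x^m/(Nat.factorial m : ℝ))) * (∑ n ∈ range (k+1), y^n/(Nat.factorial n : ℝ)) ≤
    (∑ m ∈ range (k+1), (m:ℝ) * (y^m/(Nat.factorial m : ℝ))) * (∑ n ∈ range (k+1), x^n/(Nat.factorial n : ℝ)) := by
  set T : ℕ → ℕ → ℝ := fun m n =>
    (m:ℝ)*(y^m/(Nat.factorial m : ℝ))*(x^n/(Nat.factorial n : ℝ)) -
    (m:ℝ)*(x^m/(Nat.factorial m : ℝ))*(y^n/(Nat.factorial n : ℝ)) with hT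
  have h2 : 0 ≤ ∑ m ∈ range (k+1), ∑ n ∈ range (k+1), (T m n + T n m) := by
    refine sum_nonneg fun m _ => sum_nonneg fun n _ => ?_
    have e : T m n + T n m = ((m:ℝ) - n) * (y^m/(Nat.factorial m : ℝ) * (x^n/(Nat.factorial n : ℝ)) -
        x^m/(Nat.factorial m : ℝ) * (y^n/(Nat.factorial n : ℝ))) := by
      simp only [hT]; ring
    rw [e]; exact pair_nonneg hx hxy m n
  simp only [Finset.sum_add_distrib] at h2
  have h3 : ∑ m ∈ range (k+1), ∑ n ∈ range (k+1), T n m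
      = ∑ m ∈ range (k+1), ∑ n ∈ range (k+1), T m n := Finset.sum_comm
  rw [h3] at h2
  have e : (∑ m ∈ range (k+1), (m:ℝ) * (y^m/(Nat.factorial m : ℝ))) * (∑ n ∈ range (k+1), x^n/(Nat.factorial n : ℝ)) -
      (∑ m ∈ range (k+1), (m:ℝ) * (x^m/(Nat.factorial m : ℝ))) * (∑ n ∈ range (k+1), y^n/(Nat.factorial n : ℝ))
      = ∑ m ∈ range (k+1), ∑ n ∈ range (k+1), T m n := by
    rw [Finset.sum_mul_sum, Finset.sum_mul_sum, ← Finset.sum_sub_distrib]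
    refine sum_congr rfl fun m _ => ?_
    rw [← Finset.sum_sub_distrib]
  linarith [e ▸ (by linarith : (0:ℝ) ≤ ∑ m ∈ range (k+1), ∑ n ∈ range (k+1), T m n)]

private lemma sum_pos_S (k : ℕ) {t : ℝ} (ht : 0 ≤ t) :
    0 < ∑ m ∈ range (k+1), t^m/(Nat.factorial m : ℝ) := by
  apply Finset.sum_pos'
  · intro m _
    have : (0:ℝ) < (Nat.factorial m : ℝ) := by exact_mod_cast m.factorial_pos
    positivity
  · exact ⟨0, mem_range.mpr (Nat.succ_pos k), by norm_num⟩

private lemma erlang_id (k : ℕ) {t : ℝ} (ht : 0 ≤ t) :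
    t * ErlangB k t = t - (∑ m ∈ range (k+1), (m:ℝ)*(t^m/(Nat.factorial m : ℝ))) /
      (∑ m ∈ range (k+1), t^m/(Nat.factorial m : ℝ)) := by
  have hS := sum_pos_S k ht
  have hsum : t * (∑ m ∈ range (k+1), t^m/(Nat.factorial m : ℝ)) =
      (∑ m ∈ range (k+1), (m:ℝ)*(t^m/(Nat.factorial m : ℝ))) + t^(k+1)/(Nat.factorial k : ℝ) := by
    rw [Finset.mul_sum]
    have step : ∀ m : ℕ, t * (t^m/(Nat.factorial m : ℝ)) =
        (((m+1:ℕ)):ℝ)*(t^(m+1)/(Nat.factorial (m+1) : ℝ)) := by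
      intro m
      have hm : (0:ℝ) < (Nat.factorial m : ℝ) := by exact_mod_cast m.factorial_pos
      have : ((Nat.factorial (m+1)) : ℝ) = ((m:ℝ)+1) * (Nat.factorial m : ℝ) := by
        rw [Nat.factorial_succ]; push_cast; ring
      rw [this]
      field_simp
      push_cast
      ring
    calc ∑ m ∈ range (k+1), t * (t^m/(Nat.factorial m : ℝ))
        = ∑ m ∈ range (k+1), (((m+1:ℕ)):ℝ)*(t^(m+1)/(Nat.factorial (m+1) : ℝ)) :=
          sum_congr rfl fun m _ => step m
      _ = ∑ m ∈ range (k+2), (m:ℝ)*(t^m/(Nat.factorial m : ℝ)) := by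
          rw [Finset.sum_range_succ' (fun m => (m:ℝ)*(t^m/(Nat.factorial m : ℝ))) (k+1)]
          norm_num
      _ = (∑ m ∈ range (k+1), (m:ℝ)*(t^m/(Nat.factorial m : ℝ))) + t^(k+1)/(Nat.factorial k : ℝ) := by
          rw [Finset.sum_range_succ]
          congr 1
          have : ((Nat.factorial (k+1)) : ℝ) = ((k:ℝ)+1) * (Nat.factorial k : ℝ) := by
            rw [Nat.factorial_succ]; push_cast; ring
          rw [this]
          have hk0 : (0:ℝ) < (Nat.factorial k : ℝ) := by exact_mod_cast k.factorial_pos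
          push_cast
          field_simp
  rw [ErlangB, eq_sub_iff_add_eq]
  rw [mul_div_assoc', ← add_div, div_eq_iff (ne_of_gt hS)]
  have e : t * (t^k/(Nat.factorial k : ℝ)) = t^(k+1)/(Nat.factorial k : ℝ) := by
    rw [pow_succ]; ring
  linarith

theorem lostTraffic_increment_le (k : ℕ) (hk : 1 ≤ k) :
    (∀ A B : ℝ, 0 < A → 0 < B →
      (A + B) * ErlangB k (A + B) - A * ErlangB k A ≤ B) ∧
    ∀ (p : ℕ) (A : ℕ → ℝ), (∀ j, 1 ≤ j → j ≤ p → 0 < A j) →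
      ∀ i, 1 ≤ i → i ≤ p →
        ((∑ j ∈ Finset.Icc 1 i, A j) * ErlangB k (∑ j ∈ Finset.Icc 1 i, A j) -
          (∑ j ∈ Finset.Icc 1 (i - 1), A j) * ErlangB k (∑ j ∈ Finset.Icc 1 (i - 1), A j)) / A i ≤ 1 := by
  have part1 : ∀ A B : ℝ, 0 ≤ A → 0 < B →
      (A + B) * ErlangB k (A + B) - A * ErlangB k A ≤ B := by
    intro A B hA hB
    have hAB : (0:ℝ) ≤ A + B := by linarith
    rw [erlang_id k hA, erlang_id k hAB]
    have hSA := sum_pos_S k hA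
    have hSAB := sum_pos_S k hAB
    have hch := chebyshev k hA (by linarith : A ≤ A + B)
    have hdiv : (∑ m ∈ range (k+1), (m:ℝ)*(A^m/(Nat.factorial m : ℝ))) /
        (∑ m ∈ range (k+1), A^m/(Nat.factorial m : ℝ)) ≤
        (∑ m ∈ range (k+1), (m:ℝ)*((A+B)^m/(Nat.factorial m : ℝ))) /
        (∑ m ∈ range (k+1), (A+B)^m/(Nat.factorial m : ℝ)) := by
      rw [div_le_div_iff₀ hSA hSAB]
      exact hch
    linarith
  refine ⟨fun A B hA hB => part1 A B (le_of_lt hA) hB, ?_⟩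
  intro p A hA i hi hip
  have hAi : 0 < A i := hA i hi hip
  have hX : 0 ≤ ∑ j ∈ Finset.Icc 1 (i-1), A j := by
    apply Finset.sum_nonneg
    intro j hj
    rw [Finset.mem_Icc] at hj
    exact le_of_lt (hA j hj.1 (le_trans hj.2 (le_trans (Nat.sub_le i 1) hip)))
  have hsplit : ∑ j ∈ Finset.Icc 1 i, A j = (∑ j ∈ Finset.Icc 1 (i-1), A j) + A i := by
    conv_lhs => rw [show i = (i-1)+1 from (Nat.succ_pred_eq_of_pos hi).symm]
    rw [Finset.sum_Icc_succ_top (by omega : 1 ≤ (i-1)+1)]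
    rw [Nat.sub_add_cancel hi]
  rw [div_le_one hAi, hsplit]
  exact part1 _ _ hX hAi
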